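/- Let n ≥ 1 and let N > 0 be real. There is a constant C > 0, depending only on n and N, such that for all j, j', j'' ∈ ℤ and all k, k', k'', w, w' ∈ ℤ^n satisfying 0 < j' − j'' ≤ 3, j ≤ j' + 5, |w − w'| > 2^n, Q_{j',k'} ⊆ Q^w_{j,k} and Q_{j'',k''} ⊆ Q^{w'}_{j,k}, one has (1+|2^{j'−j''}k''−k'|)^{−N} ≤ C · 2^{N(j−j')} · (1+|w−w'|)^{−N}. -/

import Mathlib

noncomputable section

open MeasureTheory Real Complex
open scoped ENNReal NNReal

/-- `ℝⁿ` modeled as functions `Fin n → ℝ`. -/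
abbrev Vec (n : ℕ) : Type := Fin n → ℝ

/-- Integer lattice `ℤⁿ`. -/
abbrev IVec (n : ℕ) : Type := Fin n → ℤ

/-- The index set `E_n = {0,1}ⁿ \ {0}`, with `{0,1}ⁿ` modeled as `Fin n → Bool`. -/
abbrev En (n : ℕ) : Type := {ε : Fin n → Bool // ε ≠ fun _ => false}

/-- The Euclidean norm on `Vec n`. -/
def enorm2 {n : ℕ} (x : Vec n) : ℝ := Real.sqrt (∑ i, (x i) ^ 2)

/-- The dyadic cube `Q_{j,k} = {x : 2^j x − k ∈ [0,1)ⁿ}` of side length `2^{−j}`. -/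
def dyadicCube (n : ℕ) (j : ℤ) (k : IVec n) : Set (Vec n) :=
  {x | ∀ i, (k i : ℝ) ≤ (2:ℝ) ^ j * x i ∧ (2:ℝ) ^ j * x i < (k i : ℝ) + 1}

/-- `Q^w_{j,k} = 2^{8−j} w + tilde-Q_{j,k}`, where `tilde-Q_{j,k}` is the unique dyadic
cube of side length `2^{8−j}` containing `Q_{j,k}` (its index is `⌊k/2^8⌋`). -/
def QW (n : ℕ) (j : ℤ) (k w : IVec n) : Set (Vec n) :=
  dyadicCube n (j - 8) (fun i => Int.fdiv (k i) 256 + w i)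

lemma enorm2_nonneg {n : ℕ} (x : Vec n) : 0 ≤ enorm2 x := Real.sqrt_nonneg _

lemma enorm2_smul {n : ℕ} (c : ℝ) (x : Vec n) :
    enorm2 (fun i => c * x i) = |c| * enorm2 x := by
  unfold enorm2
  rw [show ∑ i, (c * x i) ^ 2 = c ^ 2 * ∑ i, x i ^ 2 by
    rw [Finset.mul_sum]; exact Finset.sum_congr rfl fun i _ => by ring]
  rw [Real.sqrt_mul (sq_nonneg c), Real.sqrt_sq_eq_abs]

lemma enorm2_eq_norm {n : ℕ} (x : Vec n) :
    enorm2 x = ‖(WithLp.equiv 2 (Fin n → ℝ)).symm x‖ := by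
  rw [EuclideanSpace.norm_eq]
  simp [enorm2, _root_.sq_abs]

lemma enorm2_triangle {n : ℕ} (x y : Vec n) :
    enorm2 (fun i => x i + y i) ≤ enorm2 x + enorm2 y := by
  rw [enorm2_eq_norm, enorm2_eq_norm, enorm2_eq_norm]
  exact norm_add_le ((WithLp.equiv 2 (Fin n → ℝ)).symm x) ((WithLp.equiv 2 (Fin n → ℝ)).symm y)

lemma enorm2_le_sqrt {n : ℕ} (x : Vec n) (h : ∀ i, |x i| ≤ 1) :
    enorm2 x ≤ Real.sqrt n := by
  unfold enorm2
  apply Real.sqrt_le_sqrt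
  calc ∑ i, x i ^ 2 ≤ ∑ _i : Fin n, (1:ℝ) :=
        Finset.sum_le_sum fun i _ => by nlinarith [h i, _root_.sq_abs (x i), abs_nonneg (x i)]
    _ = n := by simp

/-- if `0 < j'−j'' ≤ 3`, `j ≤ j'+5`, `|w−w'| > 2^n`, `Q_{j',k'} ⊆ Q^w_{j,k}` and
`Q_{j'',k''} ⊆ Q^{w'}_{j,k}` then `(1+|2^{j'−j''}k''−k'|)^{−N} ≤ C 2^{N(j−j')} (1+|w−w'|)^{−N}`. -/
theorem statement7 (n : ℕ) (hn : 1 ≤ n) (N : ℝ) (hN : 0 < N) :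
    ∃ C : ℝ, 0 < C ∧ ∀ (j j' j'' : ℤ) (k k' k'' w w' : IVec n),
      0 < j' - j'' → j' - j'' ≤ 3 → j ≤ j' + 5 →
      (2:ℝ) ^ n < enorm2 (fun i => (w i : ℝ) - (w' i : ℝ)) →
      dyadicCube n j' k' ⊆ QW n j k w →
      dyadicCube n j'' k'' ⊆ QW n j k w' →
      (1 + enorm2 (fun i => (2:ℝ) ^ (j' - j'') * (k'' i : ℝ) - (k' i : ℝ))) ^ (-N) ≤
        C * (2:ℝ) ^ (N * ((j : ℝ) - (j' : ℝ))) *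
          (1 + enorm2 (fun i => (w i : ℝ) - (w' i : ℝ))) ^ (-N) := by
  refine ⟨1, one_pos, ?_⟩
  intro j j' j'' k k' k'' w w' hjj1 hjj2 hj5 hBlarge hs1 hs2
  set A := enorm2 (fun i => (2:ℝ) ^ (j' - j'') * (k'' i : ℝ) - (k' i : ℝ)) with hAdef
  set B := enorm2 (fun i => (w i : ℝ) - (w' i : ℝ)) with hBdef
  have hA0 : 0 ≤ A := enorm2_nonneg _
  have h2 : (2:ℝ) ≠ 0 := two_ne_zero
  -- corner points
  have hx' : (fun i => (k' i : ℝ) * (2:ℝ) ^ (-j')) ∈ dyadicCube n j' k' := by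
    intro i
    have h2' : (2:ℝ) ^ j' * ((k' i : ℝ) * (2:ℝ) ^ (-j')) = (k' i : ℝ) := by
      rw [mul_comm ((k' i : ℝ)) _, ← mul_assoc, ← zpow_add₀ h2]
      simp
    rw [h2']
    exact ⟨le_refl _, by linarith⟩
  have hx'' : (fun i => (k'' i : ℝ) * (2:ℝ) ^ (-j'')) ∈ dyadicCube n j'' k'' := by
    intro i
    have h2' : (2:ℝ) ^ j'' * ((k'' i : ℝ) * (2:ℝ) ^ (-j'')) = (k'' i : ℝ) := by
      rw [mul_comm ((k'' i : ℝ)) _, ← mul_assoc, ← zpow_add₀ h2]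
      simp
    rw [h2']
    exact ⟨le_refl _, by linarith⟩
  have hp := hs1 hx'
  have hq := hs2 hx''
  set p : Vec n := fun i => (2:ℝ) ^ (j - 8) * ((k' i : ℝ) * (2:ℝ) ^ (-j')) with hpdef
  set q : Vec n := fun i => (2:ℝ) ^ (j - 8) * ((k'' i : ℝ) * (2:ℝ) ^ (-j'')) with hqdef
  set u : Vec n := fun i => p i - q i - ((w i : ℝ) - (w' i : ℝ)) with hudef
  have hu1 : ∀ i, |u i| ≤ 1 := by
    intro i
    have h1 := hp i
    have h2'' := hq i
    simp only [QW, dyadicCube, Set.mem_setOf_eq] at h1 h2''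
    rw [abs_le]
    push_cast at h1 h2''
    constructor <;> simp only [hudef, hpdef, hqdef] <;> [linarith [h1.1, h2''.2]; linarith [h1.2, h2''.1]]
  -- enorm2 (p - q) = 2^(j-j'-8) * A
  have hpq : enorm2 (fun i => p i - q i) = (2:ℝ) ^ (j - j' - 8) * A := by
    have key : ∀ i, p i - q i =
        (-(2:ℝ) ^ (j - j' - 8)) * ((2:ℝ) ^ (j' - j'') * (k'' i : ℝ) - (k' i : ℝ)) := by
      intro i
      have e1 : (2:ℝ) ^ (j - 8) * (2:ℝ) ^ (-j') = (2:ℝ) ^ (j - j' - 8) := by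
        rw [← zpow_add₀ h2]; congr 1; ring
      have e2 : (2:ℝ) ^ (j - 8) * (2:ℝ) ^ (-j'') = (2:ℝ) ^ (j' - j'') * (2:ℝ) ^ (j - j' - 8) := by
        rw [← zpow_add₀ h2, ← zpow_add₀ h2]; congr 1; ring
      simp only [hpdef, hqdef]
      calc (2:ℝ) ^ (j - 8) * ((k' i : ℝ) * (2:ℝ) ^ (-j')) -
            (2:ℝ) ^ (j - 8) * ((k'' i : ℝ) * (2:ℝ) ^ (-j''))
          = ((2:ℝ) ^ (j - 8) * (2:ℝ) ^ (-j')) * (k' i : ℝ) -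
            ((2:ℝ) ^ (j - 8) * (2:ℝ) ^ (-j'')) * (k'' i : ℝ) := by ring
        _ = (2:ℝ) ^ (j - j' - 8) * (k' i : ℝ) -
            ((2:ℝ) ^ (j' - j'') * (2:ℝ) ^ (j - j' - 8)) * (k'' i : ℝ) := by rw [e1, e2]
        _ = (-(2:ℝ) ^ (j - j' - 8)) * ((2:ℝ) ^ (j' - j'') * (k'' i : ℝ) - (k' i : ℝ)) := by ring
    calc enorm2 (fun i => p i - q i)
        = enorm2 (fun i => (-(2:ℝ) ^ (j - j' - 8)) *
            ((2:ℝ) ^ (j' - j'') * (k'' i : ℝ) - (k' i : ℝ))) := by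
          congr 1; funext i; exact key i
      _ = |(-(2:ℝ) ^ (j - j' - 8))| * A := enorm2_smul _ _
      _ = (2:ℝ) ^ (j - j' - 8) * A := by
          rw [abs_neg, abs_of_pos (zpow_pos (by norm_num : (0:ℝ) < 2) _)]
  -- B ≤ 2^(j-j'-8) A + sqrt n
  have hBle : B ≤ (2:ℝ) ^ (j - j' - 8) * A + Real.sqrt n := by
    have hBeq : B = enorm2 (fun i => (p i - q i) + (-(u i))) := by
      rw [hBdef]; congr 1; funext i; simp only [hudef]; ring
    have hneg : enorm2 (fun i => -(u i)) = enorm2 u := by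
      have : (fun i => -(u i)) = (fun i => (-1:ℝ) * u i) := by funext i; ring
      rw [this, enorm2_smul]; simp
    calc B ≤ enorm2 (fun i => p i - q i) + enorm2 (fun i => -(u i)) := by
          rw [hBeq]; exact enorm2_triangle _ _
      _ = (2:ℝ) ^ (j - j' - 8) * A + enorm2 u := by rw [hpq, hneg]
      _ ≤ (2:ℝ) ^ (j - j' - 8) * A + Real.sqrt n := by
          linarith [enorm2_le_sqrt u hu1]
  -- sqrt n ≤ 2^(n-1), so 2 * sqrt n ≤ 2^n < B
  have hsqrt : Real.sqrt n ≤ (2:ℝ) ^ (n - 1) := by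
    have h1 : (n : ℝ) ≤ ((2:ℝ) ^ (n - 1)) ^ 2 := by
      have hnat : n ≤ 2 ^ (n - 1) := by
        have := Nat.lt_two_pow_self (n := n - 1)
        omega
      have h1' : (n : ℝ) ≤ (2:ℝ) ^ (n - 1) := by exact_mod_cast hnat
      nlinarith [one_le_pow₀ (by norm_num : (1:ℝ) ≤ 2) (n := n-1)]
    calc Real.sqrt n ≤ Real.sqrt (((2:ℝ) ^ (n - 1)) ^ 2) := Real.sqrt_le_sqrt h1
      _ = (2:ℝ) ^ (n - 1) := Real.sqrt_sq (by positivity)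
  have h2n : (2:ℝ) ^ n = 2 * (2:ℝ) ^ (n - 1) := by
    conv_lhs => rw [show n = 1 + (n - 1) by omega, pow_add, pow_one]
  have hB2 : (2:ℝ) ≤ B := by
    have : (2:ℝ) ≤ (2:ℝ) ^ n := by
      calc (2:ℝ) = 2 ^ 1 := (pow_one 2).symm
        _ ≤ 2 ^ n := pow_le_pow_right₀ (by norm_num) hn
    linarith
  have hsB : 2 * Real.sqrt n ≤ B := by
    have hs0 : (0:ℝ) ≤ Real.sqrt n := Real.sqrt_nonneg _
    nlinarith
  -- 128 B ≤ t A where t = 2^(j-j')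
  set t := (2:ℝ) ^ (j - j') with htdef
  have ht : 0 < t := zpow_pos (by norm_num : (0:ℝ) < 2) _
  have ht8 : (2:ℝ) ^ (j - j' - 8) = t / 256 := by
    rw [zpow_sub₀ h2]
    norm_num
    exact htdef.symm
  have h128 : 128 * B ≤ t * A := by
    rw [ht8] at hBle
    linarith
  have key : 1 + B ≤ t * (1 + A) := by
    rw [mul_add, mul_one]
    linarith
  -- final rpow manipulation
  have ha : (0:ℝ) < 1 + A := by linarith
  have hb : (0:ℝ) < 1 + B := by linarith
  rw [one_mul]
  have ht' : (2:ℝ) ^ (N * ((j : ℝ) - (j' : ℝ))) = t ^ N := by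
    rw [mul_comm, Real.rpow_mul (by norm_num : (0:ℝ) ≤ 2)]
    congr 1
    rw [show ((j : ℝ) - (j' : ℝ)) = ((j - j' : ℤ) : ℝ) by push_cast; ring, Real.rpow_intCast]
  rw [ht', Real.rpow_neg ha.le, Real.rpow_neg hb.le, ← div_eq_mul_inv, ← one_div,
    div_le_div_iff₀ (Real.rpow_pos_of_pos ha N) (Real.rpow_pos_of_pos hb N), one_mul]
  calc (1 + B) ^ N ≤ (t * (1 + A)) ^ N := Real.rpow_le_rpow hb.le key hN.le
    _ = t ^ N * (1 + A) ^ N := Real.mul_rpow ht.le ha.le
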